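/- Let M ⊆ ℤ₊² be a nonzero submonoid such that the extension M ⊆ ℤ₊² is integral (every element of ℤ₊² has a positive multiple in M) and M is normal. Then M is isomorphic to a monoid of the form G ∩ ℤ₊², where G ⊆ ℤ² is the subgroup generated by (1,a₁) and (0,a₂) for some positive integers a₁ ≥ 0, a₂ ≥ 1. -/

import Mathlib

/-- A nonzero normal submonoid `M ⊆ ℤ₊²` with `M ⊆ ℤ₊²` integral is isomorphic to
`G ∩ ℤ₊²` where `G ⊆ ℤ²` is the subgroup generated by `(1, a₁)` and `(0, a₂)` for
some integers `a₁ ≥ 0`, `a₂ ≥ 1`. -/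
theorem stmt12 (M : AddSubmonoid (ℤ × ℤ))
    (hpos : ∀ x ∈ M, 0 ≤ x.1 ∧ 0 ≤ x.2)
    (hne : M ≠ ⊥)
    (hint : ∀ x : ℤ × ℤ, 0 ≤ x.1 → 0 ≤ x.2 → ∃ t : ℕ, 0 < t ∧ t • x ∈ M)
    (hnormal : ∀ z : ℤ × ℤ, z ∈ AddSubgroup.closure (M : Set (ℤ × ℤ)) →
      (∃ t : ℕ, 0 < t ∧ t • z ∈ M) → z ∈ M) :
    ∃ (a₁ a₂ : ℕ), 1 ≤ a₂ ∧ Nonempty (M ≃+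
      ((AddSubgroup.closure {((1 : ℤ), (a₁ : ℤ)), (0, (a₂ : ℤ))}).toAddSubmonoid ⊓
        AddSubmonoid.nonneg (ℤ × ℤ) : AddSubmonoid (ℤ × ℤ))) := by
  clear hne
  set G := AddSubgroup.closure (M : Set (ℤ × ℤ)) with hGdef
  have hMG : ∀ x ∈ M, x ∈ G := fun x hx => AddSubgroup.subset_closure hx
  have hGM : ∀ z : ℤ × ℤ, z ∈ G → 0 ≤ z.1 → 0 ≤ z.2 → z ∈ M := fun z hz h1 h2 =>
    hnormal z hz (hint z h1 h2)
  obtain ⟨t, ht, htM⟩ := hint (1, 0) (by norm_num) (le_refl 0)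
  obtain ⟨s, hs, hsM⟩ := hint (0, 1) (le_refl 0) (by norm_num)
  have htM' : (((t : ℤ)), (0 : ℤ)) ∈ M := by
    have : (t : ℕ) • ((1 : ℤ), (0 : ℤ)) = (((t : ℤ)), (0 : ℤ)) := by
      simp [Prod.smul_mk]
    rwa [this] at htM
  have hsM' : ((0 : ℤ), ((s : ℤ))) ∈ M := by
    have : (s : ℕ) • ((0 : ℤ), (1 : ℤ)) = ((0 : ℤ), ((s : ℤ))) := by
      simp [Prod.smul_mk]
    rwa [this] at hsM
  -- the first-coordinate subgroup
  obtain ⟨g, hg⟩ := Int.subgroup_cyclic (G.map (AddMonoidHom.fst ℤ ℤ))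
  have hgdvd : ∀ z : ℤ × ℤ, z ∈ G → g ∣ z.1 := by
    intro z hz
    have hmem : z.1 ∈ G.map (AddMonoidHom.fst ℤ ℤ) := ⟨z, hz, rfl⟩
    rw [hg, AddSubgroup.mem_closure_singleton] at hmem
    obtain ⟨n, hn⟩ := hmem
    exact ⟨n, by rw [← hn]; rw [smul_eq_mul]; ring⟩
  have hgne : g ≠ 0 := by
    intro h
    have hd := hgdvd _ (hMG _ htM')
    rw [h] at hd
    simp only [zero_dvd_iff] at hd
    have : (t : ℤ) = 0 := hd
    omega
  set d₁ : ℕ := g.natAbs with hd₁def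
  have hd₁pos : 0 < d₁ := Int.natAbs_pos.mpr hgne
  have hd₁ne : ((d₁ : ℤ)) ≠ 0 := by exact_mod_cast hd₁pos.ne'
  have hd₁dvd : ∀ z : ℤ × ℤ, z ∈ G → ((d₁ : ℤ)) ∣ z.1 := fun z hz =>
    Int.natAbs_dvd.mpr (hgdvd z hz)
  -- element of G with first coordinate d₁
  have hexg : ∃ w : ℤ × ℤ, w ∈ G ∧ w.1 = g := by
    have : g ∈ G.map (AddMonoidHom.fst ℤ ℤ) := by
      rw [hg]; exact AddSubgroup.subset_closure rfl
    obtain ⟨w, hw, hw1⟩ := this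
    exact ⟨w, hw, hw1⟩
  obtain ⟨w, hwG, hw1⟩ := hexg
  have hz₁ : ∃ b : ℤ, (((d₁ : ℤ)), b) ∈ G := by
    rcases Int.natAbs_eq g with h | h
    · exact ⟨w.2, by rwa [show (((d₁:ℤ)), w.2) = w from Prod.ext_iff.mpr ⟨by rw [hw1, ← h], rfl⟩]⟩
    · refine ⟨(-w).2, ?_⟩
      have : (((d₁:ℤ)), (-w).2) = -w := by
        refine Prod.ext_iff.mpr ⟨?_, rfl⟩
        simp [hw1]
        omega
      rw [this]
      exact neg_mem hwG
  obtain ⟨b, hbG⟩ := hz₁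
  -- the second-coordinate kernel subgroup
  obtain ⟨h, hh⟩ := Int.subgroup_cyclic (G.comap (AddMonoidHom.inr ℤ ℤ))
  have hhdvd : ∀ y : ℤ, ((0 : ℤ), y) ∈ G → h ∣ y := by
    intro y hy
    have hmem : y ∈ G.comap (AddMonoidHom.inr ℤ ℤ) := hy
    rw [hh, AddSubgroup.mem_closure_singleton] at hmem
    obtain ⟨n, hn⟩ := hmem
    exact ⟨n, by rw [← hn]; rw [smul_eq_mul]; ring⟩
  have hhne : h ≠ 0 := by
    intro h0
    have hd := hhdvd _ (hMG _ hsM')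
    rw [h0] at hd
    simp only [zero_dvd_iff] at hd
    have : (s : ℤ) = 0 := hd
    omega
  set d₂ : ℕ := h.natAbs with hd₂def
  have hd₂pos : 0 < d₂ := Int.natAbs_pos.mpr hhne
  have hd₂ne : ((d₂ : ℤ)) ≠ 0 := by exact_mod_cast hd₂pos.ne'
  have hd₂dvd : ∀ y : ℤ, ((0 : ℤ), y) ∈ G → ((d₂ : ℤ)) ∣ y := fun y hy =>
    Int.natAbs_dvd.mpr (hhdvd y hy)
  have hd₂G : ((0 : ℤ), ((d₂ : ℤ))) ∈ G := by
    have hhG : ((0 : ℤ), h) ∈ G := by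
      have : h ∈ G.comap (AddMonoidHom.inr ℤ ℤ) := by
        rw [hh]; exact AddSubgroup.subset_closure rfl
      exact this
    rcases Int.natAbs_eq h with hc | hc
    · rwa [show ((0:ℤ), ((d₂:ℤ))) = ((0:ℤ), h) from Prod.ext_iff.mpr ⟨rfl, by rw [← hc]⟩]
    · have : ((0:ℤ), ((d₂:ℤ))) = -((0:ℤ), h) := by
        refine Prod.ext_iff.mpr ⟨by simp, ?_⟩
        simp
        omega
      rw [this]
      exact neg_mem hhG
  -- normalize b mod d₂
  set a₁ : ℕ := (b % (d₂ : ℤ)).toNat with ha₁def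
  have ha₁ : ((a₁ : ℤ)) = b % (d₂ : ℤ) := Int.toNat_of_nonneg (Int.emod_nonneg b hd₂ne)
  have hg₁G : (((d₁ : ℤ)), ((a₁ : ℤ))) ∈ G := by
    have hmem := sub_mem hbG (zsmul_mem hd₂G (b / (d₂ : ℤ)))
    have heq : (((d₁:ℤ)), b) - (b / (d₂:ℤ)) • ((0:ℤ), ((d₂:ℤ))) = (((d₁:ℤ)), ((a₁:ℤ))) := by
      refine Prod.ext_iff.mpr ⟨by simp, ?_⟩
      simp only [Prod.smul_mk, Prod.snd_sub, smul_eq_mul]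
      rw [ha₁, Int.emod_def]
      ring
    rwa [heq] at hmem
  -- key divisibility for elements of G
  have hkey : ∀ z : ℤ × ℤ, z ∈ G → ((d₂ : ℤ)) ∣ z.2 - (z.1 / (d₁ : ℤ)) * (a₁ : ℤ) := by
    intro z hz
    obtain ⟨k, hk⟩ := hd₁dvd z hz
    have hk' : z.1 / ((d₁ : ℤ)) = k := by rw [hk]; exact Int.mul_ediv_cancel_left _ hd₁ne
    have hsub : z - k • (((d₁:ℤ)), ((a₁:ℤ))) ∈ G := sub_mem hz (zsmul_mem hg₁G k)
    have heq : z - k • (((d₁:ℤ)), ((a₁:ℤ))) = ((0:ℤ), z.2 - k * (a₁:ℤ)) := by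
      refine Prod.ext_iff.mpr ⟨?_, ?_⟩
      · simp only [Prod.smul_mk, Prod.fst_sub, smul_eq_mul]
        rw [hk]; ring
      · simp only [Prod.smul_mk, Prod.snd_sub, smul_eq_mul]
    rw [heq] at hsub
    rw [hk']
    exact hd₂dvd _ hsub
  -- characterization of the target group
  have hG' : ∀ z : ℤ × ℤ,
      z ∈ AddSubgroup.closure {((1:ℤ), ((a₁:ℕ) : ℤ)), ((0:ℤ), ((d₂:ℕ) : ℤ))} ↔
        ((d₂ : ℤ)) ∣ z.2 - z.1 * (a₁ : ℤ) := by
    intro z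
    constructor
    · intro hz
      refine AddSubgroup.closure_induction ?_ ?_ ?_ ?_ hz
      · intro x hx
        simp only [Set.mem_insert_iff, Set.mem_singleton_iff] at hx
        rcases hx with rfl | rfl
        · simp
        · simp
      · simp
      · intro x y _ _ hx hy
        have := dvd_add hx hy
        simp only [Prod.fst_add, Prod.snd_add]
        convert this using 1
        · rfl
        ring
      · intro x _ hx
        simp only [Prod.fst_neg, Prod.snd_neg]
        convert dvd_neg.mpr hx using 1
        · rfl
        ring
    · rintro ⟨m, hm⟩
      have heq : z = z.1 • ((1:ℤ), ((a₁:ℤ))) + m • ((0:ℤ), ((d₂:ℤ))) := by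
        refine Prod.ext_iff.mpr ⟨?_, ?_⟩
        · simp
        · simp only [Prod.smul_mk, Prod.snd_add, smul_eq_mul]
          linarith [hm]
      rw [heq]
      exact add_mem (zsmul_mem (AddSubgroup.subset_closure (by simp)) _)
        (zsmul_mem (AddSubgroup.subset_closure (by simp)) _)
  refine ⟨a₁, d₂, hd₂pos, ?_⟩
  set N' : AddSubmonoid (ℤ × ℤ) :=
    ((AddSubgroup.closure {((1 : ℤ), ((a₁:ℕ) : ℤ)), (0, ((d₂:ℕ) : ℤ))}).toAddSubmonoid ⊓
      AddSubmonoid.nonneg (ℤ × ℤ)) with hN'def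
  have hmemN' : ∀ z : ℤ × ℤ, z ∈ N' ↔
      (((d₂ : ℤ)) ∣ z.2 - z.1 * (a₁ : ℤ)) ∧ 0 ≤ z.1 ∧ 0 ≤ z.2 := by
    intro z
    rw [hN'def, AddSubmonoid.mem_inf, AddSubmonoid.mem_nonneg]
    rw [AddSubgroup.mem_toAddSubmonoid, hG']
    constructor
    · rintro ⟨h1, h2⟩
      exact ⟨h1, (Prod.le_def.mp h2).1, (Prod.le_def.mp h2).2⟩
    · rintro ⟨h1, h2, h3⟩
      exact ⟨h1, Prod.le_def.mpr ⟨h2, h3⟩⟩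
  have memF : ∀ x : ℤ × ℤ, x ∈ M → ((x.1 / (d₁ : ℤ), x.2) : ℤ × ℤ) ∈ N' := by
    intro x hx
    rw [hmemN']
    refine ⟨hkey x (hMG x hx), ?_, (hpos x hx).2⟩
    exact Int.ediv_nonneg (hpos x hx).1 (by positivity)
  have memG : ∀ y : ℤ × ℤ, y ∈ N' → (((d₁ : ℤ)) * y.1, y.2) ∈ M := by
    intro y hy
    rw [hmemN'] at hy
    obtain ⟨⟨m, hm⟩, h1, h2⟩ := hy
    have hGmem : (((d₁:ℤ)) * y.1, y.2) ∈ G := by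
      have heq : (((d₁:ℤ)) * y.1, y.2) = y.1 • (((d₁:ℤ)), ((a₁:ℤ))) + m • ((0:ℤ), ((d₂:ℤ))) := by
        refine Prod.ext_iff.mpr ⟨?_, ?_⟩
        · simp only [Prod.smul_mk, Prod.fst_add, smul_eq_mul]; ring
        · simp only [Prod.smul_mk, Prod.snd_add, smul_eq_mul]; linarith [hm]
      rw [heq]
      exact add_mem (zsmul_mem hg₁G _) (zsmul_mem hd₂G _)
    exact hGM _ hGmem (by positivity) h2
  refine ⟨{ toFun := fun x => ⟨((x : ℤ × ℤ).1 / (d₁ : ℤ), (x : ℤ × ℤ).2), memF _ x.2⟩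
            invFun := fun y => ⟨(((d₁ : ℤ)) * (y : ℤ × ℤ).1, (y : ℤ × ℤ).2), memG _ y.2⟩
            left_inv := ?_
            right_inv := ?_
            map_add' := ?_ }⟩
  · intro x
    apply Subtype.ext
    refine Prod.ext_iff.mpr ⟨?_, rfl⟩
    exact Int.mul_ediv_cancel' (hd₁dvd _ (hMG _ x.2))
  · intro y
    apply Subtype.ext
    refine Prod.ext_iff.mpr ⟨?_, rfl⟩
    exact Int.mul_ediv_cancel_left _ hd₁ne
  · intro x y
    apply Subtype.ext
    refine Prod.ext_iff.mpr ⟨?_, rfl⟩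
    obtain ⟨u, hu⟩ := hd₁dvd _ (hMG _ x.2)
    obtain ⟨v, hv⟩ := hd₁dvd _ (hMG _ y.2)
    show ((x : ℤ × ℤ).1 + (y : ℤ × ℤ).1) / (d₁ : ℤ) =
      (x : ℤ × ℤ).1 / (d₁ : ℤ) + (y : ℤ × ℤ).1 / (d₁ : ℤ)
    rw [hu, hv, ← mul_add, Int.mul_ediv_cancel_left _ hd₁ne,
      Int.mul_ediv_cancel_left _ hd₁ne, Int.mul_ediv_cancel_left _ hd₁ne]
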